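/- Define Q(A,B) = ( 𝓘₀¹(A,B) − 𝓘₂¹(A,B) ) / ( 2 𝓘₀²(A,B) ) and Q_⊥(A,B) = ( 𝓘₀¹(A,B) + 𝓘₂¹(A,B) ) / ( 2 𝓘₀²(A,B) ). Then for every A ∈ ℝ and B ≥ 0 one has 0 < Q(A,B) < 1/2 and 0 < Q_⊥(A,B) < 1 − Q(A,B). -/

import Mathlib

open MeasureTheory Set

/-- The Fermi integral of order `s`: `φ_s(x) = (1/Γ(s)) ∫₀^∞ t^{s-1}/(e^{t-x}+1) dt`. -/
noncomputable def fermi (s x : ℝ) : ℝ :=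
  (1 / Real.Gamma s) * ∫ t in Set.Ioi (0 : ℝ), t ^ (s - 1) / (Real.exp (t - x) + 1)

/-- `𝓘_N^s(A,B) = (1/π) ∫₀^π cos(Nθ) φ_s(A + B cos θ) dθ`. -/
noncomputable def calI (N : ℕ) (s A B : ℝ) : ℝ :=
  (1 / Real.pi) * ∫ θ in (0 : ℝ)..Real.pi, Real.cos (N * θ) * fermi s (A + B * Real.cos θ)

open Filter Real intervalIntegral


lemma denom_pos (t x : ℝ) : 0 < Real.exp (t - x) + 1 := by positivity

lemma cont_f (x : ℝ) : Continuous (fun t => 1 / (Real.exp (t - x) + 1)) :=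
  continuous_const.div (by continuity) (fun t => (denom_pos t x).ne')

lemma f_le_exp (x t : ℝ) : 1 / (Real.exp (t - x) + 1) ≤ Real.exp x * Real.exp (-t) := by
  rw [div_le_iff₀ (denom_pos t x)]
  have h1 : Real.exp x * Real.exp (-t) * Real.exp (t - x) = 1 := by
    rw [← Real.exp_add, ← Real.exp_add, show x + -t + (t - x) = 0 by ring, Real.exp_zero]
  nlinarith [Real.exp_pos x, Real.exp_pos (-t), denom_pos t x,
    mul_pos (Real.exp_pos x) (Real.exp_pos (-t))]

/-- integrability of `1/(e^(t-x)+1)` on `Ioi a`. -/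
lemma int_f (x a : ℝ) : IntegrableOn (fun t => 1 / (Real.exp (t - x) + 1)) (Ioi a) := by
  have hg : IntegrableOn (fun t : ℝ => Real.exp x * Real.exp (-(1:ℝ) * t)) (Ioi a) :=
    (exp_neg_integrableOn_Ioi a one_pos).const_mul _
  refine Integrable.mono' hg ((cont_f x).aestronglyMeasurable.restrict) ?_
  filter_upwards [] with t
  rw [Real.norm_eq_abs, abs_of_pos (by positivity), neg_one_mul]
  exact f_le_exp x t

/-- integrability of `t/(e^(t-x)+1)` on `Ioi 0`. -/
lemma int_tf (x : ℝ) : IntegrableOn (fun t => t / (Real.exp (t - x) + 1)) (Ioi 0) := by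
  have hΓ : IntegrableOn (fun t : ℝ => Real.exp (-t) * t ^ ((2:ℝ) - 1)) (Ioi 0) :=
    Real.GammaIntegral_convergent (by norm_num)
  have hg : IntegrableOn (fun t : ℝ => Real.exp x * (Real.exp (-t) * t ^ ((2:ℝ)-1))) (Ioi 0) :=
    hΓ.const_mul _
  refine Integrable.mono' hg ?_ ?_
  · exact Continuous.aestronglyMeasurable
      (continuous_id.div (by continuity) (fun t => (denom_pos t x).ne')) |>.restrict
  · filter_upwards [ae_restrict_mem measurableSet_Ioi] with t ht
    have ht' : (0:ℝ) < t := ht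
    rw [Real.norm_eq_abs, abs_of_nonneg (by positivity),
      show ((2:ℝ)-1) = 1 by norm_num, Real.rpow_one]
    calc t / (Real.exp (t - x) + 1) = t * (1 / (Real.exp (t - x) + 1)) := by ring
    _ ≤ t * (Real.exp x * Real.exp (-t)) := by
        exact mul_le_mul_of_nonneg_left (f_le_exp x t) ht'.le
    _ = Real.exp x * (Real.exp (-t) * t) := by ring

/-- `∫_{Ioi a} 1/(e^(t-x)+1) dt = log(1+e^(x-a))`. -/
lemma int_f_eval (x a : ℝ) :
    ∫ t in Ioi a, 1 / (Real.exp (t - x) + 1) = Real.log (1 + Real.exp (x - a)) := by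
  have key : ∀ t : ℝ, HasDerivAt (fun t => -Real.log (1 + Real.exp (x - t)))
      (1 / (Real.exp (t - x) + 1)) t := by
    intro t
    have h1 : HasDerivAt (fun t : ℝ => x - t) (-1) t := by
      simpa using (hasDerivAt_id t).const_sub x
    have h2 : HasDerivAt (fun t : ℝ => 1 + Real.exp (x - t)) (-Real.exp (x - t)) t := by
      have := ((Real.hasDerivAt_exp (x - t)).comp t h1).const_add 1
      simpa using this
    have h3 : HasDerivAt (fun t : ℝ => Real.log (1 + Real.exp (x - t)))
        (-Real.exp (x - t) / (1 + Real.exp (x - t))) t := h2.log (by positivity)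
    refine h3.neg.congr_deriv ?_
    symm
    rw [neg_div, neg_neg, div_eq_div_iff (denom_pos t x).ne' (by positivity)]
    have h4 : Real.exp (x - t) * Real.exp (t - x) = 1 := by
      rw [← Real.exp_add, show x - t + (t - x) = 0 by ring, Real.exp_zero]
    nlinarith
  have h1 : Tendsto (fun t : ℝ => x - t) atTop atBot := by
    have := tendsto_atBot_add_const_left atTop x tendsto_neg_atTop_atBot
    simpa [sub_eq_add_neg] using this
  have h2 : Tendsto (fun t : ℝ => Real.exp (x - t)) atTop (nhds 0) :=
    Real.tendsto_exp_atBot.comp h1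
  have h3 : Tendsto (fun t : ℝ => 1 + Real.exp (x - t)) atTop (nhds 1) := by
    simpa using tendsto_const_nhds.add h2
  have htend : Tendsto (fun t => -Real.log (1 + Real.exp (x - t))) atTop (nhds 0) := by
    have := ((Real.continuousAt_log (by norm_num : (1:ℝ) ≠ 0)).tendsto.comp h3).neg
    simpa using this
  have := integral_Ioi_of_hasDerivAt_of_tendsto
    (f := fun t => -Real.log (1 + Real.exp (x - t))) (a := a)
    (key a).continuousAt.continuousWithinAt (fun t _ => key t) (int_f x a) htend
  simpa using this

noncomputable def f1 (x : ℝ) : ℝ := Real.log (1 + Real.exp x)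

lemma f1_pos (x : ℝ) : 0 < f1 x :=
  Real.log_pos (by have := Real.exp_pos x; simp [f1]; linarith)

lemma f1_cont : Continuous f1 := by
  refine continuous_iff_continuousAt.mpr (fun x => ?_)
  exact ContinuousAt.comp (Real.continuousAt_log (by positivity)) (by fun_prop)

lemma fermi_one (x : ℝ) : fermi 1 x = f1 x := by
  rw [fermi, Real.Gamma_one]
  have : ∀ t : ℝ, t ^ ((1:ℝ) - 1) / (Real.exp (t - x) + 1)
      = 1 / (Real.exp (t - x) + 1) := by
    intro t; rw [sub_self, Real.rpow_zero]
  simp only [this]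
  rw [int_f_eval x 0, f1]
  norm_num

lemma fermi_two_eq (x : ℝ) : fermi 2 x = ∫ t in Ioi (0:ℝ), t / (Real.exp (t - x) + 1) := by
  rw [fermi, Real.Gamma_two]
  have : ∀ t : ℝ, t ^ ((2:ℝ) - 1) / (Real.exp (t - x) + 1)
      = t / (Real.exp (t - x) + 1) := by
    intro t; norm_num
  simp only [this]
  norm_num


lemma log_denom (u : ℝ) : Real.log (Real.exp u + 1) = u + Real.log (1 + Real.exp (-u)) := by
  have h1 : Real.exp u + 1 = Real.exp u * (1 + Real.exp (-u)) := by
    rw [mul_add, mul_one, ← Real.exp_add]; norm_num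
  rw [h1, Real.log_mul (Real.exp_ne_zero u) (by positivity), Real.log_exp]

lemma int_F'_integrable (x : ℝ) :
    IntegrableOn (fun t => t * Real.exp (t - x) / (Real.exp (t - x) + 1) ^ 2) (Ioi 0) := by
  refine Integrable.mono' (int_tf x) ?_ ?_
  · refine Continuous.aestronglyMeasurable ?_ |>.restrict
    exact Continuous.div (by continuity) (by continuity)
      (fun t => pow_ne_zero 2 (denom_pos t x).ne')
  · filter_upwards [ae_restrict_mem measurableSet_Ioi] with t ht
    have ht' : (0:ℝ) < t := ht
    have hd := denom_pos t x
    rw [Real.norm_eq_abs, abs_of_nonneg (by positivity)]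
    rw [div_le_div_iff₀ (by positivity) hd]
    nlinarith [Real.exp_pos (t - x), mul_pos ht' (Real.exp_pos (t - x))]

lemma int_F'_eval (x : ℝ) :
    ∫ t in Ioi (0:ℝ), t * Real.exp (t - x) / (Real.exp (t - x) + 1) ^ 2 = f1 x := by
  set G : ℝ → ℝ := fun t => -(t / (Real.exp (t - x) + 1)) + (t - Real.log (Real.exp (t - x) + 1))
    with hG
  have key : ∀ t : ℝ, HasDerivAt G (t * Real.exp (t - x) / (Real.exp (t - x) + 1) ^ 2) t := by
    intro t
    have hd := denom_pos t x
    have h1 : HasDerivAt (fun t : ℝ => t - x) 1 t := by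
      simpa using (hasDerivAt_id t).sub_const x
    have h2 : HasDerivAt (fun t : ℝ => Real.exp (t - x) + 1) (Real.exp (t - x)) t := by
      have := ((Real.hasDerivAt_exp (t - x)).comp t h1).add_const 1
      simpa using this
    have h3 : HasDerivAt (fun t : ℝ => t / (Real.exp (t - x) + 1))
        ((1 * (Real.exp (t - x) + 1) - t * Real.exp (t - x)) / (Real.exp (t - x) + 1) ^ 2) t :=
      (hasDerivAt_id t).div h2 hd.ne'
    have h4 : HasDerivAt (fun t : ℝ => Real.log (Real.exp (t - x) + 1))
        (Real.exp (t - x) / (Real.exp (t - x) + 1)) t := h2.log hd.ne'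
    have h5 := (h3.neg).add (((hasDerivAt_id t).sub h4))
    refine h5.congr_deriv ?_
    field_simp
    ring
  have hG0 : G 0 = -Real.log (Real.exp (-x) + 1) := by
    simp [hG, zero_sub]
  have htend : Tendsto G atTop (nhds x) := by
    have hbig : ∀ t : ℝ, G t = -(t * (1 / (Real.exp (t - x) + 1))) + x
        - Real.log (1 + Real.exp (x - t)) := by
      intro t
      rw [hG]
      simp only
      rw [log_denom (t - x)]
      have : -(t - x) = x - t := by ring
      rw [this]; ring
    have h1 : Tendsto (fun t : ℝ => t * (1 / (Real.exp (t - x) + 1))) atTop (nhds 0) := by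
      apply squeeze_zero' (g := fun t => Real.exp x * (t * Real.exp (-t)))
      · filter_upwards [eventually_ge_atTop (0:ℝ)] with t ht
        positivity
      · filter_upwards [eventually_ge_atTop (0:ℝ)] with t ht
        calc t * (1 / (Real.exp (t - x) + 1)) ≤ t * (Real.exp x * Real.exp (-t)) :=
              mul_le_mul_of_nonneg_left (f_le_exp x t) ht
          _ = Real.exp x * (t * Real.exp (-t)) := by ring
      · have h2 : Tendsto (fun t : ℝ => t * Real.exp (-t)) atTop (nhds 0) := by
          have := Real.tendsto_pow_mul_exp_neg_atTop_nhds_zero 1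
          simpa using this
        have := h2.const_mul (Real.exp x)
        simpa using this
    have h3 : Tendsto (fun t : ℝ => x - t) atTop atBot := by
      have := tendsto_atBot_add_const_left atTop x tendsto_neg_atTop_atBot
      simpa [sub_eq_add_neg] using this
    have h4 : Tendsto (fun t : ℝ => Real.log (1 + Real.exp (x - t))) atTop (nhds 0) := by
      have h5 : Tendsto (fun t : ℝ => 1 + Real.exp (x - t)) atTop (nhds 1) := by
        simpa using tendsto_const_nhds.add (Real.tendsto_exp_atBot.comp h3)
      have := (Real.continuousAt_log (by norm_num : (1:ℝ) ≠ 0)).tendsto.comp h5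
      simpa [Function.comp_def] using this
    have := ((h1.neg.add_const x).sub h4)
    simp only [neg_zero, zero_add, sub_zero] at this
    apply Tendsto.congr (fun t => (hbig t).symm)
    simpa using this
  have := integral_Ioi_of_hasDerivAt_of_tendsto (a := 0)
    (key 0).continuousAt.continuousWithinAt (fun t _ => key t) (int_F'_integrable x) htend
  rw [this, hG0, f1]
  rw [show (1:ℝ) + Real.exp x = Real.exp x * (Real.exp (-x) + 1) by
    rw [mul_add, mul_one, ← Real.exp_add]; simp]
  rw [Real.log_mul (Real.exp_ne_zero x) (by positivity), Real.log_exp]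
  ring

/-- pointwise derivative in x of `t/(e^(t-x)+1)` -/
lemma hasDerivAt_inner (t y : ℝ) :
    HasDerivAt (fun y => t / (Real.exp (t - y) + 1))
      (t * Real.exp (t - y) / (Real.exp (t - y) + 1) ^ 2) y := by
  have h1 : HasDerivAt (fun y : ℝ => t - y) (-1) y := by
    simpa using (hasDerivAt_id y).const_sub t
  have h2 : HasDerivAt (fun y : ℝ => Real.exp (t - y) + 1) (-Real.exp (t - y)) y := by
    have := ((Real.hasDerivAt_exp (t - y)).comp y h1).add_const 1
    simpa using this
  have h3 := (hasDerivAt_const y t).div h2 (denom_pos t y).ne'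
  refine h3.congr_deriv ?_
  field_simp
  ring


lemma fermi_two_hasDeriv (x : ℝ) : HasDerivAt (fermi 2) (f1 x) x := by
  have key : HasDerivAt (fun y => ∫ t in Ioi (0:ℝ), t / (Real.exp (t - y) + 1))
      (∫ t in Ioi (0:ℝ), t * Real.exp (t - x) / (Real.exp (t - x) + 1) ^ 2) x := by
    have main := _root_.hasDerivAt_integral_of_dominated_loc_of_deriv_le
      (F := fun y t => t / (Real.exp (t - y) + 1))
      (F' := fun y t => t * Real.exp (t - y) / (Real.exp (t - y) + 1) ^ 2)
      (x₀ := x) (s := Metric.ball x 1) (μ := volume.restrict (Ioi 0))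
      (bound := fun t => Real.exp (x + 1) * (Real.exp (-t) * t))
      (Metric.ball_mem_nhds x one_pos) ?_ ((int_tf x)) ?_ ?_ ?_ ?_
    · exact main.2
    · filter_upwards [] with y
      exact Continuous.aestronglyMeasurable
        (continuous_id.div (by continuity) (fun t => (denom_pos t y).ne')) |>.restrict
    · refine Continuous.aestronglyMeasurable ?_ |>.restrict
      refine Continuous.div (by continuity) (by continuity) (fun t => ?_)
      exact pow_ne_zero 2 (denom_pos t x).ne'
    · filter_upwards [ae_restrict_mem measurableSet_Ioi] with t ht
      intro y hy
      have ht' : (0:ℝ) < t := ht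
      have hy' : |y - x| < 1 := by simpa [Metric.mem_ball, Real.dist_eq] using hy
      have hyx : y < x + 1 := by cases abs_lt.mp hy' with | intro h1 h2 => linarith
      rw [Real.norm_eq_abs, abs_of_nonneg (by positivity)]
      have hd := denom_pos t y
      have step1 : t * Real.exp (t - y) / (Real.exp (t - y) + 1) ^ 2
          ≤ t * (1 / (Real.exp (t - y) + 1)) := by
        rw [div_le_iff₀ (by positivity), mul_one_div, div_mul_eq_mul_div, le_div_iff₀ hd]
        nlinarith [Real.exp_pos (t - y)]
      have step2 : t * (1 / (Real.exp (t - y) + 1)) ≤ t * (Real.exp y * Real.exp (-t)) :=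
        mul_le_mul_of_nonneg_left (f_le_exp y t) ht'.le
      have step3 : t * (Real.exp y * Real.exp (-t)) ≤ Real.exp (x+1) * (Real.exp (-t) * t) := by
        have h5 : Real.exp y ≤ Real.exp (x+1) := Real.exp_le_exp.mpr hyx.le
        calc t * (Real.exp y * Real.exp (-t)) = Real.exp y * (Real.exp (-t) * t) := by ring
          _ ≤ Real.exp (x+1) * (Real.exp (-t) * t) :=
              mul_le_mul_of_nonneg_right h5 (by positivity)
      linarith
    · have h := (Real.GammaIntegral_convergent (by norm_num : (0:ℝ) < 2)).const_mul
        (Real.exp (x+1))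
      refine h.congr ?_
      filter_upwards [] with t
      rw [show ((2:ℝ)-1) = 1 by norm_num, Real.rpow_one]
    · filter_upwards [] with t
      intro y _
      exact hasDerivAt_inner t y
  have heq : (fun y => ∫ t in Ioi (0:ℝ), t / (Real.exp (t - y) + 1)) = fermi 2 := by
    funext y; rw [fermi_two_eq]
  rw [heq] at key
  convert key using 1
  exact (int_F'_eval x).symm

lemma fermi_two_cont : Continuous (fermi 2) :=
  continuous_iff_continuousAt.mpr fun x => (fermi_two_hasDeriv x).continuousAt

lemma f1_hasDeriv (x : ℝ) :
    HasDerivAt f1 (Real.exp x / (1 + Real.exp x)) x := by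
  have h2 : HasDerivAt (fun x : ℝ => 1 + Real.exp x) (Real.exp x) x := by
    simpa using (Real.hasDerivAt_exp x).const_add 1
  exact h2.log (by positivity)

lemma f1_gt (x : ℝ) : Real.exp x / (1 + Real.exp x) < f1 x := by
  have hz : (0:ℝ) < 1 + Real.exp x := by positivity
  have hz1 : (1:ℝ) < 1 + Real.exp x := by have := Real.exp_pos x; linarith
  have hne : (1 + Real.exp x)⁻¹ ≠ 1 := by
    have : (1 + Real.exp x)⁻¹ < 1 := by
      rw [inv_lt_one_iff₀]; right; exact hz1
    exact this.ne
  have := Real.log_lt_sub_one_of_pos (by positivity : (0:ℝ) < (1 + Real.exp x)⁻¹) hne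
  rw [Real.log_inv] at this
  have heq : Real.exp x / (1 + Real.exp x) = 1 - (1 + Real.exp x)⁻¹ := by
    field_simp
    ring
  rw [heq, f1]
  linarith

noncomputable def Hd (x : ℝ) : ℝ := fermi 2 x - f1 x

lemma Hd_hasDeriv (x : ℝ) :
    HasDerivAt Hd (f1 x - Real.exp x / (1 + Real.exp x)) x :=
  (fermi_two_hasDeriv x).sub (f1_hasDeriv x)

lemma Hd_mono : StrictMono Hd := by
  apply strictMono_of_deriv_pos
  intro x
  rw [(Hd_hasDeriv x).deriv]
  have := f1_gt x
  linarith

lemma fermi_two_nonneg (x : ℝ) : 0 ≤ fermi 2 x := by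
  rw [fermi_two_eq]
  apply setIntegral_nonneg measurableSet_Ioi
  intro t ht
  have : (0:ℝ) < t := ht
  positivity

lemma fermi_two_le_exp (x : ℝ) : fermi 2 x ≤ Real.exp x := by
  rw [fermi_two_eq]
  have hΓ : ∫ t in Ioi (0:ℝ), Real.exp (-t) * t ^ ((2:ℝ)-1) = 1 := by
    rw [← Real.Gamma_eq_integral (by norm_num : (0:ℝ) < 2)]
    exact Real.Gamma_two
  have hint : IntegrableOn (fun t : ℝ => Real.exp x * (Real.exp (-t) * t ^ ((2:ℝ)-1)))
      (Ioi 0) := (Real.GammaIntegral_convergent (by norm_num : (0:ℝ) < 2)).const_mul _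
  have hmono := setIntegral_mono_on (int_tf x) hint measurableSet_Ioi ?_
  · calc _ ≤ _ := hmono
      _ = Real.exp x * ∫ t in Ioi (0:ℝ), Real.exp (-t) * t ^ ((2:ℝ)-1) := by
          rw [MeasureTheory.integral_const_mul]
      _ = Real.exp x := by rw [hΓ, mul_one]
  · intro t ht
    have ht' : (0:ℝ) < t := ht
    rw [show ((2:ℝ)-1) = 1 by norm_num, Real.rpow_one]
    calc t / (Real.exp (t - x) + 1) = t * (1 / (Real.exp (t - x) + 1)) := by ring
      _ ≤ t * (Real.exp x * Real.exp (-t)) :=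
          mul_le_mul_of_nonneg_left (f_le_exp x t) ht'.le
      _ = Real.exp x * (Real.exp (-t) * t) := by ring

lemma Hd_tendsto : Tendsto Hd atBot (nhds 0) := by
  have h1 : Tendsto (fermi 2) atBot (nhds 0) :=
    squeeze_zero fermi_two_nonneg fermi_two_le_exp Real.tendsto_exp_atBot
  have h2 : Tendsto f1 atBot (nhds 0) := by
    have h3 : Tendsto (fun y : ℝ => 1 + Real.exp y) atBot (nhds 1) := by
      simpa using tendsto_const_nhds.add Real.tendsto_exp_atBot
    have := (Real.continuousAt_log (by norm_num : (1:ℝ) ≠ 0)).tendsto.comp h3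
    simp only [Function.comp_def, Real.log_one] at this
    exact this
  have := h1.sub h2
  rw [sub_zero] at this
  exact this

lemma fermi_two_gt (x : ℝ) : f1 x < fermi 2 x := by
  have h1 : 0 ≤ Hd (x - 1) := by
    refine le_of_tendsto Hd_tendsto ?_
    filter_upwards [eventually_le_atBot (x - 1)] with y hy
    exact Hd_mono.monotone hy
  have h2 : Hd (x - 1) < Hd x := Hd_mono (by linarith)
  have : 0 < Hd x := lt_of_le_of_lt h1 h2
  rw [Hd] at this
  linarith

section Refl
variable (A B : ℝ) (hB : 0 ≤ B)

/-- monotonicity of the symmetrized integrand. -/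
lemma Fmono {s c : ℝ} (hB : 0 ≤ B) (hs : 0 ≤ s) (hsc : s ≤ c) :
    f1 (A + B * s) + f1 (A - B * s) ≤ f1 (A + B * c) + f1 (A - B * c) := by
  have key : Real.exp (A + B*s) + Real.exp (A - B*s)
      ≤ Real.exp (A + B*c) + Real.exp (A - B*c) := by
    have h1 : Real.exp (A + B*s) ≤ Real.exp (A + B*c) :=
      Real.exp_le_exp.mpr (by nlinarith)
    have h2 : Real.exp (A - B*s - (A + B*c)) ≤ 1 := Real.exp_le_one_iff.mpr (by nlinarith)
    have e1 : Real.exp (A - B*s) = Real.exp (A - B*s - (A + B*c)) * Real.exp (A + B*c) := by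
      rw [← Real.exp_add]; ring_nf
    have e2 : Real.exp (A - B*c) = Real.exp (A - B*s - (A + B*c)) * Real.exp (A + B*s) := by
      rw [← Real.exp_add]; ring_nf
    nlinarith [Real.exp_pos (A - B*s - (A + B*c))]
  have hprod : (1 + Real.exp (A + B*s)) * (1 + Real.exp (A - B*s))
      ≤ (1 + Real.exp (A + B*c)) * (1 + Real.exp (A - B*c)) := by
    have h3 : Real.exp (A + B*s) * Real.exp (A - B*s)
        = Real.exp (A + B*c) * Real.exp (A - B*c) := by
      rw [← Real.exp_add, ← Real.exp_add]; ring_nf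
    nlinarith
  have p1 : (0:ℝ) < 1 + Real.exp (A + B*s) := by positivity
  have p2 : (0:ℝ) < 1 + Real.exp (A - B*s) := by positivity
  have p3 : (0:ℝ) < 1 + Real.exp (A + B*c) := by positivity
  have p4 : (0:ℝ) < 1 + Real.exp (A - B*c) := by positivity
  calc f1 (A + B*s) + f1 (A - B*s)
      = Real.log ((1 + Real.exp (A + B*s)) * (1 + Real.exp (A - B*s))) := by
        rw [f1, f1, ← Real.log_mul p1.ne' p2.ne']
    _ ≤ Real.log ((1 + Real.exp (A + B*c)) * (1 + Real.exp (A - B*c))) :=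
        Real.log_le_log (by positivity) hprod
    _ = f1 (A + B*c) + f1 (A - B*c) := by
        rw [f1, f1, ← Real.log_mul p3.ne' p4.ne']
end Refl

section Refl2
variable (A B : ℝ)

lemma g1_cont : Continuous (fun θ : ℝ => f1 (A + B * Real.cos θ)) :=
  f1_cont.comp (by continuity)

set_option maxHeartbeats 1000000 in
lemma J_nonneg (hB : 0 ≤ B) :
    0 ≤ ∫ θ in (0:ℝ)..Real.pi, Real.cos (2*θ) * f1 (A + B * Real.cos θ) := by
  have hπ := Real.pi_pos
  have c0 : Continuous (fun θ : ℝ => Real.cos (2*θ) * f1 (A + B * Real.cos θ)) :=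
    (by continuity : Continuous fun θ : ℝ => Real.cos (2*θ)).mul (g1_cont A B)
  -- step 1 : fold [π/2, π] onto [0, π/2]
  have split1 : ∫ θ in (0:ℝ)..Real.pi, Real.cos (2*θ) * f1 (A + B * Real.cos θ)
      = (∫ θ in (0:ℝ)..(Real.pi/2), Real.cos (2*θ) * f1 (A + B * Real.cos θ))
        + ∫ θ in (Real.pi/2)..Real.pi, Real.cos (2*θ) * f1 (A + B * Real.cos θ) :=
    (integral_add_adjacent_intervals (c0.intervalIntegrable _ _)
      (c0.intervalIntegrable _ _)).symm
  have fold1 : ∫ θ in (Real.pi/2)..Real.pi, Real.cos (2*θ) * f1 (A + B * Real.cos θ)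
      = ∫ θ in (0:ℝ)..(Real.pi/2), Real.cos (2*θ) * f1 (A - B * Real.cos θ) := by
    have := intervalIntegral.integral_comp_sub_left (a := (0:ℝ)) (b := Real.pi/2)
      (fun θ => Real.cos (2*θ) * f1 (A + B * Real.cos θ)) Real.pi
    rw [show Real.pi - Real.pi/2 = Real.pi/2 by ring, sub_zero] at this
    rw [← this]
    apply intervalIntegral.integral_congr
    intro θ _
    simp only
    rw [Real.cos_pi_sub, show 2*(Real.pi - θ) = 2*Real.pi - 2*θ by ring]
    rw [Real.cos_sub, Real.cos_two_pi, Real.sin_two_pi]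
    ring_nf
  -- step 2 : fold [π/4, π/2] onto [0, π/4]
  have c1 : Continuous (fun θ : ℝ => Real.cos (2*θ)
      * (f1 (A + B * Real.cos θ) + f1 (A - B * Real.cos θ))) := by
    apply Continuous.mul (by continuity)
    exact (g1_cont A B).add (f1_cont.comp (by continuity))
  have split2 : ∫ θ in (0:ℝ)..(Real.pi/2), Real.cos (2*θ)
        * (f1 (A + B * Real.cos θ) + f1 (A - B * Real.cos θ))
      = (∫ θ in (0:ℝ)..(Real.pi/4), Real.cos (2*θ)
          * (f1 (A + B * Real.cos θ) + f1 (A - B * Real.cos θ)))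
        + ∫ θ in (Real.pi/4)..(Real.pi/2), Real.cos (2*θ)
          * (f1 (A + B * Real.cos θ) + f1 (A - B * Real.cos θ)) :=
    (integral_add_adjacent_intervals (c1.intervalIntegrable _ _)
      (c1.intervalIntegrable _ _)).symm
  have fold2 : ∫ θ in (Real.pi/4)..(Real.pi/2), Real.cos (2*θ)
        * (f1 (A + B * Real.cos θ) + f1 (A - B * Real.cos θ))
      = ∫ θ in (0:ℝ)..(Real.pi/4), -(Real.cos (2*θ)
          * (f1 (A + B * Real.sin θ) + f1 (A - B * Real.sin θ))) := by
    have := intervalIntegral.integral_comp_sub_left (a := (0:ℝ)) (b := Real.pi/4)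
      (fun θ => Real.cos (2*θ) * (f1 (A + B * Real.cos θ) + f1 (A - B * Real.cos θ)))
      (Real.pi/2)
    rw [show Real.pi/2 - Real.pi/4 = Real.pi/4 by ring, sub_zero] at this
    rw [← this]
    apply intervalIntegral.integral_congr
    intro θ _
    simp only
    rw [Real.cos_pi_div_two_sub, show 2*(Real.pi/2 - θ) = Real.pi - 2*θ by ring,
      Real.cos_pi_sub]
    ring
  -- combine
  have isin : IntervalIntegrable (fun θ : ℝ => Real.cos (2*θ)
      * (f1 (A + B * Real.sin θ) + f1 (A - B * Real.sin θ))) volume 0 (Real.pi/4) :=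
    (Continuous.mul (by continuity) ((Continuous.comp f1_cont (by continuity)).add
      (Continuous.comp f1_cont (by continuity)))).intervalIntegrable _ _
  have i2 : IntervalIntegrable (fun θ : ℝ => Real.cos (2*θ) * f1 (A - B*Real.cos θ))
      volume 0 (Real.pi/2) :=
    (Continuous.mul (by continuity) (Continuous.comp f1_cont
      (by continuity))).intervalIntegrable _ _
  rw [split1, fold1, ← intervalIntegral.integral_add (c0.intervalIntegrable _ _) i2]
  have heq : ∀ θ : ℝ, Real.cos (2*θ) * f1 (A + B * Real.cos θ)
      + Real.cos (2*θ) * f1 (A - B * Real.cos θ)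
      = Real.cos (2*θ) * (f1 (A + B * Real.cos θ) + f1 (A - B * Real.cos θ)) :=
    fun θ => by ring
  rw [intervalIntegral.integral_congr (fun θ _ => heq θ), split2, fold2,
    intervalIntegral.integral_neg, ← sub_eq_add_neg,
    ← intervalIntegral.integral_sub (c1.intervalIntegrable _ _) isin]
  · apply intervalIntegral.integral_nonneg (by positivity)
    intro θ hθ
    obtain ⟨h0, h4⟩ := hθ
    have hcosnn : 0 ≤ Real.cos (2*θ) := by
      apply Real.cos_nonneg_of_mem_Icc
      constructor <;> nlinarith [Real.pi_pos]
    have hsin_nonneg : 0 ≤ Real.sin θ :=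
      Real.sin_nonneg_of_nonneg_of_le_pi h0 (by nlinarith [Real.pi_pos])
    have hsc : Real.sin θ ≤ Real.cos θ := by
      rw [← Real.cos_pi_div_two_sub]
      apply Real.cos_le_cos_of_nonneg_of_le_pi h0 (by nlinarith [Real.pi_pos])
      nlinarith [Real.pi_pos]
    have := Fmono A B hB hsin_nonneg hsc
    nlinarith [mul_nonneg hcosnn (show (0:ℝ) ≤ (f1 (A + B * Real.cos θ)
      + f1 (A - B * Real.cos θ)) - (f1 (A + B * Real.sin θ) + f1 (A - B * Real.sin θ))
      by linarith)]
end Refl2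

section Final
variable (A B : ℝ)

lemma fermic_cont : Continuous (fun θ : ℝ => fermi 2 (A + B * Real.cos θ)) :=
  fermi_two_cont.comp (by continuity)

theorem Q_bounds (A B : ℝ) (hB : 0 ≤ B) :
    0 < (calI 0 1 A B - calI 2 1 A B) / (2 * calI 0 2 A B) ∧
    (calI 0 1 A B - calI 2 1 A B) / (2 * calI 0 2 A B) < 1 / 2 ∧
    0 < (calI 0 1 A B + calI 2 1 A B) / (2 * calI 0 2 A B) ∧
    (calI 0 1 A B + calI 2 1 A B) / (2 * calI 0 2 A B)
      < 1 - (calI 0 1 A B - calI 2 1 A B) / (2 * calI 0 2 A B) := by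
  have hπ := Real.pi_pos
  have hπ' : (0:ℝ) < 1 / Real.pi := by positivity
  set P1 := ∫ θ in (0:ℝ)..Real.pi, f1 (A + B * Real.cos θ) with hP1def
  set J := ∫ θ in (0:ℝ)..Real.pi, Real.cos (2*θ) * f1 (A + B * Real.cos θ) with hJdef
  set P2 := ∫ θ in (0:ℝ)..Real.pi, fermi 2 (A + B * Real.cos θ) with hP2def
  -- integrability
  have i1 : IntervalIntegrable (fun θ : ℝ => f1 (A + B * Real.cos θ)) volume 0 Real.pi :=
    (g1_cont A B).intervalIntegrable _ _
  have icos : Continuous (fun θ : ℝ => Real.cos (2*θ) * f1 (A + B * Real.cos θ)) :=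
    Continuous.mul (by continuity) (g1_cont A B)
  have i0 : IntervalIntegrable (fun θ : ℝ => Real.cos (2*θ) * f1 (A + B * Real.cos θ))
      volume 0 Real.pi := icos.intervalIntegrable _ _
  -- calI expansions
  have ea : calI 0 1 A B = (1 / Real.pi) * P1 := by
    simp only [calI, Nat.cast_zero, zero_mul, Real.cos_zero, one_mul, fermi_one, hP1def]
  have eb : calI 2 1 A B = (1 / Real.pi) * J := by
    simp only [calI, Nat.cast_ofNat, fermi_one, hJdef]
  have ec : calI 0 2 A B = (1 / Real.pi) * P2 := by
    simp only [calI, Nat.cast_zero, zero_mul, Real.cos_zero, one_mul, hP2def]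
  -- basic facts
  have hP1 : 0 < P1 :=
    intervalIntegral_pos_of_pos i1 (fun θ => f1_pos _) hπ
  have hP12 : P1 < P2 := by
    have hd : 0 < ∫ θ in (0:ℝ)..Real.pi,
        (fermi 2 (A + B * Real.cos θ) - f1 (A + B * Real.cos θ)) :=
      intervalIntegral_pos_of_pos
        (((fermic_cont A B).sub (g1_cont A B)).intervalIntegrable _ _)
        (fun θ => sub_pos.mpr (fermi_two_gt _)) hπ
    rw [intervalIntegral.integral_sub ((fermic_cont A B).intervalIntegrable _ _) i1] at hd
    rw [hP1def, hP2def]; linarith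
  have hP2pos : 0 < P2 := hP1.trans hP12
  have hJ : 0 ≤ J := J_nonneg A B hB
  have hPJ : 0 < P1 - J := by
    have hs : 0 < ∫ θ in (0:ℝ)..Real.pi,
        (f1 (A + B * Real.cos θ) - Real.cos (2*θ) * f1 (A + B * Real.cos θ)) := by
      apply intervalIntegral_pos_of_pos_on (i1.sub i0) _ hπ
      intro θ hθ
      have hs := Real.sin_pos_of_pos_of_lt_pi hθ.1 hθ.2
      have hc2 := Real.cos_two_mul θ
      have hsc := Real.sin_sq_add_cos_sq θ
      have h1 : Real.cos (2*θ) < 1 := by nlinarith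
      nlinarith [f1_pos (A + B * Real.cos θ)]
    rw [intervalIntegral.integral_sub i1 i0] at hs
    rw [hP1def, hJdef]; linarith
  have hPJ' : 0 < P1 + J := by
    have hi1 : IntervalIntegrable (fun θ : ℝ => f1 (A + B * Real.cos θ)
        + Real.cos (2*θ) * f1 (A + B * Real.cos θ)) volume 0 (Real.pi/2) :=
      ((g1_cont A B).add icos).intervalIntegrable _ _
    have hi2 : IntervalIntegrable (fun θ : ℝ => f1 (A + B * Real.cos θ)
        + Real.cos (2*θ) * f1 (A + B * Real.cos θ)) volume (Real.pi/2) Real.pi :=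
      ((g1_cont A B).add icos).intervalIntegrable _ _
    have hfirst : 0 < ∫ θ in (0:ℝ)..(Real.pi/2), (f1 (A + B * Real.cos θ)
        + Real.cos (2*θ) * f1 (A + B * Real.cos θ)) := by
      apply intervalIntegral_pos_of_pos_on hi1 _ (by linarith)
      intro θ hθ
      have hcpos : 0 < Real.cos θ :=
        Real.cos_pos_of_mem_Ioo ⟨by linarith [hθ.1], hθ.2⟩
      rw [Real.cos_two_mul θ]
      nlinarith [mul_pos (f1_pos (A + B * Real.cos θ)) (pow_pos hcpos 2)]
    have hsecond : 0 ≤ ∫ θ in (Real.pi/2)..Real.pi, (f1 (A + B * Real.cos θ)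
        + Real.cos (2*θ) * f1 (A + B * Real.cos θ)) := by
      apply intervalIntegral.integral_nonneg (by linarith)
      intro θ _
      nlinarith [mul_nonneg (f1_pos (A + B * Real.cos θ)).le
        (show 0 ≤ 1 + Real.cos (2*θ) by nlinarith [Real.neg_one_le_cos (2*θ)]),
        f1_pos (A + B * Real.cos θ)]
    have hs : 0 < ∫ θ in (0:ℝ)..Real.pi,
        (f1 (A + B * Real.cos θ) + Real.cos (2*θ) * f1 (A + B * Real.cos θ)) := by
      rw [← intervalIntegral.integral_add_adjacent_intervals hi1 hi2]
      linarith
    rw [intervalIntegral.integral_add i1 i0] at hs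
    rw [hP1def, hJdef]; linarith
  -- final arithmetic
  have hden : 0 < 2 * calI 0 2 A B := by
    rw [ec]; nlinarith [mul_pos hπ' hP2pos]
  have hnum1 : 0 < calI 0 1 A B - calI 2 1 A B := by
    rw [ea, eb]; nlinarith [mul_pos hπ' hPJ]
  have hnum2 : 0 < calI 0 1 A B + calI 2 1 A B := by
    rw [ea, eb]; nlinarith [mul_pos hπ' hPJ']
  have hlt : calI 0 1 A B - calI 2 1 A B < calI 0 2 A B := by
    rw [ea, eb, ec]
    nlinarith [mul_pos hπ' (show (0:ℝ) < P2 - P1 by linarith), mul_nonneg hπ'.le hJ]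
  have hlt2 : calI 0 1 A B < calI 0 2 A B := by
    rw [ea, ec]
    nlinarith [mul_pos hπ' (show (0:ℝ) < P2 - P1 by linarith)]
  refine ⟨div_pos hnum1 hden, ?_, div_pos hnum2 hden, ?_⟩
  · rw [div_lt_iff₀ hden]; linarith
  · have key : (calI 0 1 A B + calI 2 1 A B) + (calI 0 1 A B - calI 2 1 A B)
        < 2 * calI 0 2 A B := by nlinarith [hlt2]
    have h1 : (calI 0 1 A B + calI 2 1 A B) / (2 * calI 0 2 A B)
        + (calI 0 1 A B - calI 2 1 A B) / (2 * calI 0 2 A B) < 1 := by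
      rw [← add_div, div_lt_one hden]
      exact key
    linarith
end Final
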